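/- The 1CSP instance E = (11, 155, l) with unit demands and l = (9, 12, 12, 16, 16, 46, 46, 54, 69, 77, 102) satisfies Δ_p(E) = 126/125; in particular, there exists a 1CSP instance with demand n = 11 whose proper gap is strictly larger than 1. -/

import Mathlib

open Finset
open scoped ENNReal NNReal

/-- A 1CSP instance with unit demands: `n` is a positive integer, the piece
lengths satisfy `0 < l 0 ≤ l 1 ≤ … ≤ l (n-1) ≤ L`. -/
def IsInstance (n : ℕ) (L : ℝ) (l : Fin n → ℝ) : Prop :=
  0 < n ∧ (∀ i, 0 < l i) ∧ (∀ i j : Fin n, i ≤ j → l i ≤ l j) ∧ (∀ i, l i ≤ L)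

/-- a binary (0/1) pattern -/
def IsBinary {n : ℕ} (a : Fin n → ℕ) : Prop := ∀ i, a i ≤ 1

/-- The set of feasible patterns `P^f(E)`. -/
def feasiblePatterns (n : ℕ) (L : ℝ) (l : Fin n → ℝ) : Set (Fin n → ℕ) :=
  {a | ∑ i, l i * (a i : ℝ) ≤ L}

/-- The set of proper patterns `P^p(E)` (for unit demands). -/
def properPatterns (n : ℕ) (L : ℝ) (l : Fin n → ℝ) : Set (Fin n → ℕ) :=
  {a | IsBinary a ∧ ∑ i, l i * (a i : ℝ) ≤ L}

/-- `z_D(P,E)`: minimum of `∑ x_a` over finitely supported `x : P → ℤ_{≥0}`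
with `∑ x_a • a = 𝟏`; (`⊤` if infeasible). -/
noncomputable def zD (n : ℕ) (P : Set (Fin n → ℕ)) : ℝ≥0∞ :=
  sInf {c : ℝ≥0∞ | ∃ x : (Fin n → ℕ) →₀ ℕ,
    (∀ a ∈ x.support, a ∈ P) ∧
    (∀ i, ∑ a ∈ x.support, x a * a i = 1) ∧
    c = ∑ a ∈ x.support, (x a : ℝ≥0∞)}

/-- `z_C(P,E)`: infimum of `∑ x_a` over finitely supported `x : P → ℝ_{≥0}`
with `∑ x_a • a = 𝟏`; (`⊤` if infeasible). -/
noncomputable def zC (n : ℕ) (P : Set (Fin n → ℕ)) : ℝ≥0∞ :=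
  sInf {c : ℝ≥0∞ | ∃ x : (Fin n → ℕ) →₀ NNReal,
    (∀ a ∈ x.support, a ∈ P) ∧
    (∀ i, ∑ a ∈ x.support, (x a : ℝ) * (a i : ℝ) = 1) ∧
    c = ∑ a ∈ x.support, (x a : ℝ≥0∞)}

noncomputable def zDf (n : ℕ) (L : ℝ) (l : Fin n → ℝ) : ℝ≥0∞ :=
  zD n (feasiblePatterns n L l)

noncomputable def zCf (n : ℕ) (L : ℝ) (l : Fin n → ℝ) : ℝ≥0∞ :=
  zC n (feasiblePatterns n L l)

noncomputable def zCp (n : ℕ) (L : ℝ) (l : Fin n → ℝ) : ℝ≥0∞ :=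
  zC n (properPatterns n L l)

/-- the gap `Δ(E) = z_D^f(E) - z_C^f(E)` -/
noncomputable def gap (n : ℕ) (L : ℝ) (l : Fin n → ℝ) : ℝ≥0∞ :=
  zDf n L l - zCf n L l

/-- the proper gap `Δ_p(E) = z_D^f(E) - z_C^p(E)` -/
noncomputable def properGap (n : ℕ) (L : ℝ) (l : Fin n → ℝ) : ℝ≥0∞ :=
  zDf n L l - zCp n L l

/-- the dominance relation `a ⪯ b`: all suffix sums of `a` are at most those of `b`. -/
def Dominates {n : ℕ} (a b : Fin n → ℕ) : Prop :=
  ∀ j : Fin n, ∑ i ∈ univ.filter (fun i => j ≤ i), a i ≤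
    ∑ i ∈ univ.filter (fun i => j ≤ i), b i


def ok2 : List (ℕ × ℕ) → ℕ → ℕ → Bool
  | [], sl, sw => !(sl ≤ 155 : Bool) || (sw ≤ 125 : Bool)
  | p :: t, sl, sw => ok2 t sl sw && ok2 t (sl + p.1) (sw + p.2)

def ok3 : List ℕ → ℕ → ℕ → ℕ → Bool
  | [], s0, s1, s2 => !((s0 ≤ 155 : Bool) && (s1 ≤ 155 : Bool) && (s2 ≤ 155 : Bool))
  | l :: t, s0, s1, s2 => ok3 t (s0 + l) s1 s2 && ok3 t s0 (s1 + l) s2 && ok3 t s0 s1 (s2 + l)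

lemma ok2_spec : ∀ (n : ℕ) (l w : Fin n → ℕ) (sl sw : ℕ),
    ok2 (List.ofFn fun i => (l i, w i)) sl sw = true →
    ∀ a : Fin n → ℕ, (∀ i, a i ≤ 1) →
    sl + ∑ i, l i * a i ≤ 155 → sw + ∑ i, w i * a i ≤ 125 := by
  intro n
  induction n with
  | zero =>
    intro l w sl sw h a _ hle
    simp only [List.ofFn_zero, ok2, Bool.or_eq_true, Bool.not_eq_true', decide_eq_false_iff_not,
      decide_eq_true_eq] at h
    simp only [Finset.univ_eq_empty, Finset.sum_empty, Nat.add_zero] at hle ⊢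
    rcases h with h | h
    · omega
    · omega
  | succ n ih =>
    intro l w sl sw h a ha hle
    rw [List.ofFn_succ] at h
    simp only [ok2, Bool.and_eq_true] at h
    obtain ⟨h1, h2⟩ := h
    rw [Fin.sum_univ_succ] at hle ⊢
    have ha0 : a 0 = 0 ∨ a 0 = 1 := by have := ha 0; omega
    rcases ha0 with ha0 | ha0 <;> rw [ha0] at hle ⊢ <;>
      simp only [Nat.mul_zero, Nat.mul_one] at hle ⊢
    · have key := ih (fun i => l i.succ) (fun i => w i.succ) sl sw h1
        (fun i => a i.succ) (fun i => ha i.succ)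
      beta_reduce at key
      omega
    · have key := ih (fun i => l i.succ) (fun i => w i.succ) (sl + l 0) (sw + w 0) h2
        (fun i => a i.succ) (fun i => ha i.succ)
      beta_reduce at key
      omega

lemma ok3_spec : ∀ (n : ℕ) (l : Fin n → ℕ) (s0 s1 s2 : ℕ),
    ok3 (List.ofFn l) s0 s1 s2 = true → ∀ g : Fin n → Fin 3,
    ¬(s0 + (∑ i, if g i = 0 then l i else 0) ≤ 155 ∧
      s1 + (∑ i, if g i = 1 then l i else 0) ≤ 155 ∧
      s2 + (∑ i, if g i = 2 then l i else 0) ≤ 155) := by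
  intro n
  induction n with
  | zero =>
    intro l s0 s1 s2 h g hc
    simp only [List.ofFn_zero, ok3, Bool.not_eq_true', Bool.and_eq_false_iff,
      decide_eq_false_iff_not] at h
    simp only [Finset.univ_eq_empty, Finset.sum_empty, Nat.add_zero] at hc
    rcases h with (h | h) | h <;> omega
  | succ n ih =>
    intro l s0 s1 s2 h g hc
    rw [List.ofFn_succ] at h
    simp only [ok3, Bool.and_eq_true] at h
    obtain ⟨⟨h0, h1⟩, h2⟩ := h
    rw [Fin.sum_univ_succ, Fin.sum_univ_succ, Fin.sum_univ_succ] at hc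
    have hg0 : g 0 = 0 ∨ g 0 = 1 ∨ g 0 = 2 := by
      have := (g 0).isLt
      rcases Nat.lt_succ_iff_lt_or_eq.mp this with h | h
      · rcases Nat.lt_succ_iff_lt_or_eq.mp h with h' | h'
        · left; exact Fin.ext (by omega)
        · right; left; exact Fin.ext h'
      · right; right; exact Fin.ext h
    have key0 := ih (fun i => l i.succ) (s0 + l 0) s1 s2 h0 (fun i => g i.succ)
    have key1 := ih (fun i => l i.succ) s0 (s1 + l 0) s2 h1 (fun i => g i.succ)
    have key2 := ih (fun i => l i.succ) s0 s1 (s2 + l 0) h2 (fun i => g i.succ)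
    beta_reduce at key0 key1 key2
    rcases hg0 with hg | hg | hg <;>
      simp only [hg, if_pos rfl, reduceCtorEq, if_true, if_false] at hc <;>
      [ exact key0 ⟨by omega, by omega, by omega⟩;
        exact key1 ⟨by omega, by omega, by omega⟩;
        exact key2 ⟨by omega, by omega, by omega⟩ ]

def lnat : Fin 11 → ℕ := ![9, 12, 12, 16, 16, 46, 46, 54, 69, 77, 102]
def wnat : Fin 11 → ℕ := ![5, 9, 9, 12, 12, 38, 38, 44, 57, 63, 87]

set_option maxHeartbeats 2000000 in
lemma ok2_true : ok2 (List.ofFn fun i => (lnat i, wnat i)) 0 0 = true := by decide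
set_option maxHeartbeats 4000000 in
lemma ok3_true : ok3 (List.ofFn lnat) 0 0 0 = true := by decide

lemma lR_eq : (![9, 12, 12, 16, 16, 46, 46, 54, 69, 77, 102] : Fin 11 → ℝ) = fun i => (lnat i : ℝ) := by
  funext i; fin_cases i <;> norm_num [lnat]

lemma sum_cast_eq (v : Fin 11 → ℕ) (a : Fin 11 → ℕ) :
    ∑ i, (v i : ℝ) * (a i : ℝ) = ((∑ i, v i * a i : ℕ) : ℝ) := by push_cast; rfl

lemma feas_nat {a : Fin 11 → ℕ} (h : ∑ i, (lnat i : ℝ) * (a i : ℝ) ≤ 155) :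
    ∑ i, lnat i * a i ≤ 155 := by
  rw [sum_cast_eq] at h; exact_mod_cast h

/-- dual feasibility over proper patterns -/
lemma dual_proper {a : Fin 11 → ℕ} (hb : ∀ i, a i ≤ 1) (h : ∑ i, lnat i * a i ≤ 155) :
    ∑ i, wnat i * a i ≤ 125 := by
  have := ok2_spec 11 lnat wnat 0 0 ok2_true a hb (by omega)
  omega

/-- no 3-partition of the items into parts of length ≤ 155 -/
lemma no3part (g : Fin 11 → Fin 3) :
    ¬((∑ i, if g i = 0 then lnat i else 0) ≤ 155 ∧
      (∑ i, if g i = 1 then lnat i else 0) ≤ 155 ∧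
      (∑ i, if g i = 2 then lnat i else 0) ≤ 155) := by
  have := ok3_spec 11 lnat 0 0 0 ok3_true g
  omega




def p1 : Fin 11 → ℕ := ![0,1,0,0,0,0,0,0,0,0,1]
def p2 : Fin 11 → ℕ := ![1,0,0,0,0,0,0,0,1,1,0]
def p3 : Fin 11 → ℕ := ![0,0,1,1,1,0,1,1,0,0,0]
def p4 : Fin 11 → ℕ := ![0,0,0,0,0,1,0,0,0,0,0]

noncomputable def xint : (Fin 11 → ℕ) →₀ ℕ :=
  Finsupp.single p1 1 + Finsupp.single p2 1 + Finsupp.single p3 1 + Finsupp.single p4 1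

lemma xint_supp : ∀ a ∈ xint.support, a = p1 ∨ a = p2 ∨ a = p3 ∨ a = p4 := by
  intro a ha
  rw [Finsupp.mem_support_iff] at ha
  by_contra h
  push_neg at h
  obtain ⟨h1, h2, h3, h4⟩ := h
  simp [xint, Finsupp.add_apply, Finsupp.single_apply, h1.symm, h2.symm, h3.symm, h4.symm] at ha

lemma pfeas : ∀ p ∈ [p1, p2, p3, p4], p ∈ feasiblePatterns 11 155 ![9, 12, 12, 16, 16, 46, 46, 54, 69, 77, 102] := by
  intro p hp
  simp only [feasiblePatterns, Set.mem_setOf_eq, lR_eq]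
  fin_cases hp <;>
    · simp only [Fin.sum_univ_succ, p1, p2, p3, p4, lnat, Matrix.cons_val_succ, Matrix.cons_val_zero]
      norm_num

lemma xint_cover : ∀ i, ∑ a ∈ xint.support, xint a * a i = 1 := by
  intro i
  have h0 : ∀ (a : Fin 11 → ℕ), (0 : ℕ) * a i = 0 := fun _ => zero_mul _
  have hadd : ∀ (a : Fin 11 → ℕ) (b₁ b₂ : ℕ), (b₁ + b₂) * a i = b₁ * a i + b₂ * a i :=
    fun _ _ _ => add_mul _ _ _
  have : ∑ a ∈ xint.support, xint a * a i = xint.sum (fun a v => v * a i) := rfl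
  rw [this]
  unfold xint
  rw [Finsupp.sum_add_index' h0 hadd, Finsupp.sum_add_index' h0 hadd,
    Finsupp.sum_add_index' h0 hadd, Finsupp.sum_single_index (h0 _),
    Finsupp.sum_single_index (h0 _), Finsupp.sum_single_index (h0 _),
    Finsupp.sum_single_index (h0 _)]
  clear h0 hadd this
  revert i; decide

lemma xint_cost : ∑ a ∈ xint.support, (xint a : ℝ≥0∞) = 4 := by
  have h0 : ∀ (_ : Fin 11 → ℕ), (0 : ℕ) = 0 := fun _ => rfl
  have hadd : ∀ (_ : Fin 11 → ℕ) (b₁ b₂ : ℕ), b₁ + b₂ = b₁ + b₂ := fun _ _ _ => rfl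
  have hnat : ∑ a ∈ xint.support, xint a = 4 := by
    have : ∑ a ∈ xint.support, xint a = xint.sum (fun _ v => v) := rfl
    rw [this]
    unfold xint
    rw [Finsupp.sum_add_index' h0 hadd, Finsupp.sum_add_index' h0 hadd,
      Finsupp.sum_add_index' h0 hadd, Finsupp.sum_single_index rfl,
      Finsupp.sum_single_index rfl, Finsupp.sum_single_index rfl,
      Finsupp.sum_single_index rfl]
  rw [← Nat.cast_sum, hnat]
  norm_num

lemma zDf_le : zDf 11 155 ![9, 12, 12, 16, 16, 46, 46, 54, 69, 77, 102] ≤ 4 := by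
  apply sInf_le
  exact ⟨xint, fun a ha => by rcases xint_supp a ha with h|h|h|h <;> (subst h; exact pfeas _ (by simp)),
    xint_cover, xint_cost.symm⟩

lemma zDf_ge : 4 ≤ zDf 11 155 ![9, 12, 12, 16, 16, 46, 46, 54, 69, 77, 102] := by
  apply le_sInf
  rintro c ⟨x, hsupp, hcov, rfl⟩
  -- reduce to natural number count
  rw [← Nat.cast_sum]
  have : (4 : ℝ≥0∞) = ((4 : ℕ) : ℝ≥0∞) := by norm_num
  rw [this, Nat.cast_le]
  by_contra hN
  push_neg at hN
  have hN3 : ∑ a ∈ x.support, x a ≤ 3 := by omega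
  -- every pattern in the support covering some item has x a = 1 and a i = 1 there
  have key : ∀ a ∈ x.support, ∀ i, 1 ≤ a i → x a = 1 ∧ a i = 1 := by
    intro a ha i hai
    have hxa : 1 ≤ x a := Nat.one_le_iff_ne_zero.mpr (Finsupp.mem_support_iff.mp ha)
    have hle : x a * a i ≤ 1 := by
      rw [← hcov i]
      exact Finset.single_le_sum (f := fun a => x a * a i) (fun _ _ => Nat.zero_le _) ha
    constructor
    · nlinarith
    · nlinarith
  -- choose a covering pattern for each item
  have hex : ∀ i, ∃ a, a ∈ x.support ∧ 1 ≤ a i := by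
    intro i
    have h1 : ∑ a ∈ x.support, x a * a i ≠ 0 := by rw [hcov i]; omega
    obtain ⟨a, ha, hne⟩ := Finset.exists_ne_zero_of_sum_ne_zero h1
    refine ⟨a, ha, Nat.pos_of_ne_zero fun h => hne ?_⟩
    rw [h, Nat.mul_zero]
  choose g hg1 hg2 using hex
  -- the image of g has at most 3 elements
  set T : Finset (Fin 11 → ℕ) := Finset.image g Finset.univ with hT
  have hTsub : T ⊆ x.support := by
    intro a ha
    rw [hT, Finset.mem_image] at ha
    obtain ⟨i, _, rfl⟩ := ha
    exact hg1 i
  have hTcard : T.card ≤ 3 := by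
    have h1 : T.card = ∑ a ∈ T, 1 := by simp
    have h2 : ∑ a ∈ T, 1 ≤ ∑ a ∈ T, x a := by
      apply Finset.sum_le_sum
      intro a ha
      exact Nat.one_le_iff_ne_zero.mpr (Finsupp.mem_support_iff.mp (hTsub ha))
    have h3 : ∑ a ∈ T, x a ≤ ∑ a ∈ x.support, x a :=
      Finset.sum_le_sum_of_subset hTsub
    omega
  -- build the 3-coloring
  have hmem : ∀ i, g i ∈ T := fun i => Finset.mem_image_of_mem g (Finset.mem_univ i)
  obtain ⟨e⟩ : Nonempty (T ↪ Fin 3) := by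
    apply Function.Embedding.nonempty_of_card_le
    rw [Fintype.card_coe, Fintype.card_fin]
    exact hTcard
  set G : Fin 11 → Fin 3 := fun i => e ⟨g i, hmem i⟩ with hG
  have hinj : ∀ i j, G i = G j → g i = g j := by
    intro i j h
    have := e.injective h
    simpa using this
  -- each color class has total length ≤ 155
  have hclass : ∀ k : Fin 3, (∑ i, if G i = k then lnat i else 0) ≤ 155 := by
    intro k
    by_cases hk : ∃ i0, G i0 = k
    · obtain ⟨i0, hi0⟩ := hk
      set a := g i0 with ha0
      have hafeas : ∑ j, lnat j * a j ≤ 155 := by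
        apply feas_nat
        have := hsupp a (hg1 i0)
        simpa [feasiblePatterns, lR_eq] using this
      calc (∑ i, if G i = k then lnat i else 0) ≤ ∑ i, lnat i * a i := by
            apply Finset.sum_le_sum
            intro i _
            by_cases hik : G i = k
            · rw [if_pos hik]
              have hgi : g i = a := hinj i i0 (hik.trans hi0.symm)
              have : a i = 1 := by
                rw [← hgi]
                exact (key (g i) (hg1 i) i (hg2 i)).2
              rw [this, Nat.mul_one]
            · rw [if_neg hik]; exact Nat.zero_le _
        _ ≤ 155 := hafeas
    · push_neg at hk
      have : (∑ i, if G i = k then lnat i else 0) = 0 := by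
        apply Finset.sum_eq_zero
        intro i _
        rw [if_neg (hk i)]
      omega
  exact no3part G ⟨hclass 0, hclass 1, hclass 2⟩

def q1 : Fin 11 → ℕ := ![0,0,0,1,1,0,1,0,0,1,0]
def q2 : Fin 11 → ℕ := ![1,0,0,0,0,1,1,1,0,0,0]
def q3 : Fin 11 → ℕ := ![1,1,0,1,1,0,0,0,0,0,1]
def q4 : Fin 11 → ℕ := ![0,1,1,1,0,1,0,0,1,0,0]
def q5 : Fin 11 → ℕ := ![0,1,1,0,0,0,0,1,0,1,0]
def q6 : Fin 11 → ℕ := ![0,0,0,0,0,0,1,0,0,0,1]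
def q7 : Fin 11 → ℕ := ![1,0,1,1,1,0,0,0,0,0,1]
def q8 : Fin 11 → ℕ := ![1,0,0,0,0,0,0,0,1,1,0]
def q9 : Fin 11 → ℕ := ![0,0,0,0,0,1,0,0,0,0,1]
def q10 : Fin 11 → ℕ := ![0,1,1,0,1,0,1,0,1,0,0]
def q11 : Fin 11 → ℕ := ![0,0,0,1,1,0,0,1,1,0,0]

noncomputable def yfrac : (Fin 11 → ℕ) →₀ ℝ≥0 :=
  Finsupp.single q1 (29/125) + Finsupp.single q2 (42/125) + Finsupp.single q3 (20/125)
  + Finsupp.single q4 (26/125) + Finsupp.single q5 (53/125) + Finsupp.single q6 (28/125)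
  + Finsupp.single q7 (20/125) + Finsupp.single q8 (43/125) + Finsupp.single q9 (57/125)
  + Finsupp.single q10 (26/125) + Finsupp.single q11 (30/125)

lemma yfrac_supp : ∀ a ∈ yfrac.support, a = q1 ∨ a = q2 ∨ a = q3 ∨ a = q4 ∨ a = q5 ∨ a = q6
    ∨ a = q7 ∨ a = q8 ∨ a = q9 ∨ a = q10 ∨ a = q11 := by
  intro a ha
  rw [Finsupp.mem_support_iff] at ha
  by_contra h
  push_neg at h
  obtain ⟨h1, h2, h3, h4, h5, h6, h7, h8, h9, h10, h11⟩ := h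
  simp [yfrac, Finsupp.add_apply, Finsupp.single_apply, h1.symm, h2.symm, h3.symm, h4.symm,
    h5.symm, h6.symm, h7.symm, h8.symm, h9.symm, h10.symm, h11.symm] at ha

lemma qprop : ∀ p ∈ [q1, q2, q3, q4, q5, q6, q7, q8, q9, q10, q11],
    p ∈ properPatterns 11 155 ![9, 12, 12, 16, 16, 46, 46, 54, 69, 77, 102] := by
  intro p hp
  simp only [properPatterns, Set.mem_setOf_eq, lR_eq]
  fin_cases hp <;>
    refine ⟨by intro i; revert i; decide, ?_⟩ <;>
    · simp only [Fin.sum_univ_succ, q1, q2, q3, q4, q5, q6, q7, q8, q9, q10, q11, lnat, Matrix.cons_val_succ, Matrix.cons_val_zero]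
      norm_num

lemma covnat : ∀ i, 29 * q1 i + 42 * q2 i + 20 * q3 i + 26 * q4 i + 53 * q5 i + 28 * q6 i
    + 20 * q7 i + 43 * q8 i + 57 * q9 i + 26 * q10 i + 30 * q11 i = 125 := by decide

lemma yfrac_cover : ∀ i, ∑ a ∈ yfrac.support, (yfrac a : ℝ) * (a i : ℝ) = 1 := by
  intro i
  have h0 : ∀ (a : Fin 11 → ℕ), ((0 : ℝ≥0) : ℝ) * (a i : ℝ) = 0 := by
    intro a; rw [NNReal.coe_zero, zero_mul]
  have hadd : ∀ (a : Fin 11 → ℕ) (b₁ b₂ : ℝ≥0),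
      ((b₁ + b₂ : ℝ≥0) : ℝ) * (a i : ℝ) = (b₁ : ℝ) * a i + (b₂ : ℝ) * a i := by
    intro a b₁ b₂; rw [NNReal.coe_add, add_mul]
  have : ∑ a ∈ yfrac.support, (yfrac a : ℝ) * (a i : ℝ)
      = yfrac.sum (fun a v => (v : ℝ) * (a i : ℝ)) := rfl
  rw [this]
  unfold yfrac
  rw [Finsupp.sum_add_index' h0 hadd, Finsupp.sum_add_index' h0 hadd,
    Finsupp.sum_add_index' h0 hadd, Finsupp.sum_add_index' h0 hadd,
    Finsupp.sum_add_index' h0 hadd, Finsupp.sum_add_index' h0 hadd,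
    Finsupp.sum_add_index' h0 hadd, Finsupp.sum_add_index' h0 hadd,
    Finsupp.sum_add_index' h0 hadd, Finsupp.sum_add_index' h0 hadd,
    Finsupp.sum_single_index (h0 _), Finsupp.sum_single_index (h0 _),
    Finsupp.sum_single_index (h0 _), Finsupp.sum_single_index (h0 _),
    Finsupp.sum_single_index (h0 _), Finsupp.sum_single_index (h0 _),
    Finsupp.sum_single_index (h0 _), Finsupp.sum_single_index (h0 _),
    Finsupp.sum_single_index (h0 _), Finsupp.sum_single_index (h0 _),
    Finsupp.sum_single_index (h0 _)]
  have h : (((29 * q1 i + 42 * q2 i + 20 * q3 i + 26 * q4 i + 53 * q5 i + 28 * q6 i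
      + 20 * q7 i + 43 * q8 i + 57 * q9 i + 26 * q10 i + 30 * q11 i : ℕ)) : ℝ) = 125 := by
    exact_mod_cast congrArg (Nat.cast : ℕ → ℝ) (covnat i)
  push_cast at h ⊢
  linarith

lemma yfrac_cost : ∑ a ∈ yfrac.support, (yfrac a : ℝ≥0∞) = 374 / 125 := by
  have hnn : ∑ a ∈ yfrac.support, yfrac a = 374 / 125 := by
    have : ∑ a ∈ yfrac.support, yfrac a = yfrac.sum (fun _ v => v) := rfl
    rw [this]
    unfold yfrac
    rw [Finsupp.sum_add_index' (fun _ => rfl) (fun _ _ _ => rfl),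
      Finsupp.sum_add_index' (fun _ => rfl) (fun _ _ _ => rfl),
      Finsupp.sum_add_index' (fun _ => rfl) (fun _ _ _ => rfl),
      Finsupp.sum_add_index' (fun _ => rfl) (fun _ _ _ => rfl),
      Finsupp.sum_add_index' (fun _ => rfl) (fun _ _ _ => rfl),
      Finsupp.sum_add_index' (fun _ => rfl) (fun _ _ _ => rfl),
      Finsupp.sum_add_index' (fun _ => rfl) (fun _ _ _ => rfl),
      Finsupp.sum_add_index' (fun _ => rfl) (fun _ _ _ => rfl),
      Finsupp.sum_add_index' (fun _ => rfl) (fun _ _ _ => rfl),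
      Finsupp.sum_add_index' (fun _ => rfl) (fun _ _ _ => rfl),
      Finsupp.sum_single_index rfl, Finsupp.sum_single_index rfl,
      Finsupp.sum_single_index rfl, Finsupp.sum_single_index rfl,
      Finsupp.sum_single_index rfl, Finsupp.sum_single_index rfl,
      Finsupp.sum_single_index rfl, Finsupp.sum_single_index rfl,
      Finsupp.sum_single_index rfl, Finsupp.sum_single_index rfl,
      Finsupp.sum_single_index rfl]
    apply NNReal.coe_injective
    push_cast
    norm_num
  rw [← ENNReal.coe_finset_sum, hnn, ENNReal.coe_div (by norm_num)]
  norm_num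

lemma zCp_le : zCp 11 155 ![9, 12, 12, 16, 16, 46, 46, 54, 69, 77, 102] ≤ 374 / 125 := by
  apply sInf_le
  refine ⟨yfrac, ?_, yfrac_cover, yfrac_cost.symm⟩
  intro a ha
  rcases yfrac_supp a ha with h|h|h|h|h|h|h|h|h|h|h <;> (subst h; exact qprop _ (by simp))

lemma zCp_ge : (374 / 125 : ℝ≥0∞) ≤ zCp 11 155 ![9, 12, 12, 16, 16, 46, 46, 54, 69, 77, 102] := by
  apply le_sInf
  rintro c ⟨x, hsupp, hcov, rfl⟩
  -- real total
  set s : ℝ := ∑ a ∈ x.support, (x a : ℝ) with hs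
  have hkey : (374 : ℝ) ≤ 125 * s := by
    have swap : ∑ i : Fin 11, (wnat i : ℝ) * (∑ a ∈ x.support, (x a : ℝ) * (a i : ℝ))
        = ∑ a ∈ x.support, (x a : ℝ) * (∑ i : Fin 11, (wnat i : ℝ) * (a i : ℝ)) := by
      simp only [Finset.mul_sum]
      rw [Finset.sum_comm]
      apply Finset.sum_congr rfl
      intro a _
      apply Finset.sum_congr rfl
      intro i _
      ring
    have lhs : ∑ i : Fin 11, (wnat i : ℝ) * (∑ a ∈ x.support, (x a : ℝ) * (a i : ℝ)) = 374 := by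
      have : ∀ i : Fin 11, (wnat i : ℝ) * (∑ a ∈ x.support, (x a : ℝ) * (a i : ℝ)) = wnat i := by
        intro i; rw [hcov i, mul_one]
      rw [Finset.sum_congr rfl fun i _ => this i]
      norm_num [wnat, Fin.sum_univ_succ]
    have rhs : ∑ a ∈ x.support, (x a : ℝ) * (∑ i : Fin 11, (wnat i : ℝ) * (a i : ℝ))
        ≤ ∑ a ∈ x.support, (x a : ℝ) * 125 := by
      apply Finset.sum_le_sum
      intro a ha
      apply mul_le_mul_of_nonneg_left _ (x a).coe_nonneg
      obtain ⟨hbin, hfeas⟩ := hsupp a ha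
      rw [lR_eq] at hfeas
      have hnat : ∑ i, wnat i * a i ≤ 125 := dual_proper hbin (feas_nat hfeas)
      rw [sum_cast_eq]
      exact_mod_cast hnat
    have : ∑ a ∈ x.support, (x a : ℝ) * 125 = 125 * s := by
      rw [hs, Finset.mul_sum]
      apply Finset.sum_congr rfl
      intro a _; ring
    linarith [lhs ▸ swap ▸ rhs, this]
  -- transfer to ℝ≥0∞
  have hcoe : ∑ a ∈ x.support, (x a : ℝ≥0∞) = ((∑ a ∈ x.support, x a : ℝ≥0) : ℝ≥0∞) := by
    rw [ENNReal.coe_finset_sum]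
  rw [hcoe]
  have h1 : (374 / 125 : ℝ≥0∞) = ((374 / 125 : ℝ≥0) : ℝ≥0∞) := by
    rw [ENNReal.coe_div (by norm_num)]; norm_num
  rw [h1, ENNReal.coe_le_coe, ← NNReal.coe_le_coe]
  have h2 : ((∑ a ∈ x.support, x a : ℝ≥0) : ℝ) = s := by
    rw [hs, NNReal.coe_sum]
  rw [h2]
  rw [NNReal.coe_div]
  push_cast
  linarith

/-- the instance `E = (11, 155, (9,12,12,16,16,46,46,54,69,77,102))`
satisfies `Δ_p(E) = 126/125`; in particular some instance with demand `11` has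
proper gap strictly larger than `1`. -/
theorem stmt_18 :
    properGap 11 155 ![9, 12, 12, 16, 16, 46, 46, 54, 69, 77, 102] = 126 / 125 ∧
    ∃ (L : ℝ) (l : Fin 11 → ℝ), IsInstance 11 L l ∧ 1 < properGap 11 L l := by
  have hD : zDf 11 155 ![9, 12, 12, 16, 16, 46, 46, 54, 69, 77, 102] = 4 :=
    le_antisymm zDf_le zDf_ge
  have hC : zCp 11 155 ![9, 12, 12, 16, 16, 46, 46, 54, 69, 77, 102] = 374 / 125 :=
    le_antisymm zCp_le zCp_ge
  have hgap : properGap 11 155 ![9, 12, 12, 16, 16, 46, 46, 54, 69, 77, 102] = 126 / 125 := by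
    rw [properGap, hD, hC]
    apply ENNReal.sub_eq_of_eq_add
    · exact (ENNReal.div_lt_top (by norm_num) (by norm_num)).ne
    · rw [ENNReal.div_add_div_same]
      rw [ENNReal.eq_div_iff (by norm_num) (by norm_num)]
      norm_num
  refine ⟨hgap, 155, ![9, 12, 12, 16, 16, 46, 46, 54, 69, 77, 102], ?_, ?_⟩
  · refine ⟨by norm_num, ?_, ?_, ?_⟩
    · rw [lR_eq]
      intro i
      have : 0 < lnat i := by revert i; decide
      show (0:ℝ) < (lnat i : ℝ)
      exact_mod_cast this
    · rw [lR_eq]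
      intro i j hij
      have : lnat i ≤ lnat j := by
        have : ∀ i j : Fin 11, i ≤ j → lnat i ≤ lnat j := by decide
        exact this i j hij
      show (lnat i : ℝ) ≤ (lnat j : ℝ)
      exact_mod_cast this
    · rw [lR_eq]
      intro i
      have : lnat i ≤ 155 := by revert i; decide
      have h2 : (lnat i : ℝ) ≤ 155 := by exact_mod_cast this
      simpa using h2
  · rw [hgap]
    have : (1 : ℝ≥0∞) < ((126 / 125 : ℝ≥0) : ℝ≥0∞) := by
      rw [← ENNReal.coe_one, ENNReal.coe_lt_coe, ← NNReal.coe_lt_coe]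
      push_cast
      norm_num
    convert this using 1
    rw [ENNReal.coe_div (by norm_num)]
    norm_num
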